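/- On ℝ⁶ with spherical-type coordinates (r, θ, φ) (r > 0, 0 < θ < π, cos φ ≠ 0, sin φ ≠ 0) and conjugate momenta, the Hamiltonian H = (1/2)(p_r² + p_θ²/r² + p_φ²/(r² sin²θ)) − k/r + k₁/(r² sin²θ cos²φ) + k₂/(r² sin²θ sin²φ) Poisson-commutes with I₁ = (1/2)(p_θ² + p_φ²/sin²θ) + k₁/(sin²θ cos²φ) + k₂/(sin²θ sin²φ). -/

import Mathlib

/-- Canonical Poisson bracket on ℝⁿ × ℝⁿ (positions, momenta). -/
noncomputable def pb {n : ℕ} (f g : (Fin n → ℝ) × (Fin n → ℝ) → ℝ) :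
    (Fin n → ℝ) × (Fin n → ℝ) → ℝ :=
  fun z => ∑ i, (fderiv ℝ f z (Pi.single i 1, 0) * fderiv ℝ g z (0, Pi.single i 1)
    - fderiv ℝ f z (0, Pi.single i 1) * fderiv ℝ g z (Pi.single i 1, 0))

set_option maxHeartbeats 1000000

/-- Spherical-coordinate Hamiltonian
H = (1/2)(p_r² + p_θ²/r² + p_φ²/(r²sin²θ)) − k/r + k₁/(r²sin²θcos²φ) + k₂/(r²sin²θsin²φ)
Poisson-commutes with I₁ = (1/2)(p_θ² + p_φ²/sin²θ) + k₁/(sin²θcos²φ) + k₂/(sin²θsin²φ).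
Coordinates: r = z.1 0, θ = z.1 1, φ = z.1 2 with momenta z.2 0, z.2 1, z.2 2. -/
theorem stmt11 (k k₁ k₂ : ℝ) :
    ∀ z : (Fin 3 → ℝ) × (Fin 3 → ℝ), 0 < z.1 0 → Real.sin (z.1 1) ≠ 0 →
      Real.cos (z.1 2) ≠ 0 → Real.sin (z.1 2) ≠ 0 →
    pb (fun w => (1 / 2) * ((w.2 0) ^ 2 + (w.2 1) ^ 2 / (w.1 0) ^ 2
          + (w.2 2) ^ 2 / ((w.1 0) ^ 2 * Real.sin (w.1 1) ^ 2))
          - k / (w.1 0)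
          + k₁ / ((w.1 0) ^ 2 * Real.sin (w.1 1) ^ 2 * Real.cos (w.1 2) ^ 2)
          + k₂ / ((w.1 0) ^ 2 * Real.sin (w.1 1) ^ 2 * Real.sin (w.1 2) ^ 2))
       (fun w => (1 / 2) * ((w.2 1) ^ 2 + (w.2 2) ^ 2 / Real.sin (w.1 1) ^ 2)
          + k₁ / (Real.sin (w.1 1) ^ 2 * Real.cos (w.1 2) ^ 2)
          + k₂ / (Real.sin (w.1 1) ^ 2 * Real.sin (w.1 2) ^ 2)) z = 0 := by
  intro z hr hs hc hsn
  have hx : ∀ i : Fin 3, HasFDerivAt (fun w : (Fin 3 → ℝ) × (Fin 3 → ℝ) => w.1 i)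
      ((ContinuousLinearMap.proj i).comp
        (ContinuousLinearMap.fst ℝ (Fin 3 → ℝ) (Fin 3 → ℝ))) z :=
    fun i => ((ContinuousLinearMap.proj i).comp
      (ContinuousLinearMap.fst ℝ (Fin 3 → ℝ) (Fin 3 → ℝ))).hasFDerivAt
  have hp : ∀ i : Fin 3, HasFDerivAt (fun w : (Fin 3 → ℝ) × (Fin 3 → ℝ) => w.2 i)
      ((ContinuousLinearMap.proj i).comp
        (ContinuousLinearMap.snd ℝ (Fin 3 → ℝ) (Fin 3 → ℝ))) z :=
    fun i => ((ContinuousLinearMap.proj i).comp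
      (ContinuousLinearMap.snd ℝ (Fin 3 → ℝ) (Fin 3 → ℝ))).hasFDerivAt
  have hrne : z.1 0 ≠ 0 := hr.ne'
  have hr2ne : (z.1 0) ^ 2 ≠ 0 := pow_ne_zero _ hrne
  have hs2ne : Real.sin (z.1 1) ^ 2 ≠ 0 := pow_ne_zero _ hs
  have hc2ne : Real.cos (z.1 2) ^ 2 ≠ 0 := pow_ne_zero _ hc
  have hsn2ne : Real.sin (z.1 2) ^ 2 ≠ 0 := pow_ne_zero _ hsn
  -- building blocks
  have hr2 := (hasDerivAt_pow 2 (z.1 0)).comp_hasFDerivAt z (hx 0)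
  have hsin := (Real.hasDerivAt_sin (z.1 1)).comp_hasFDerivAt z (hx 1)
  have hsin2 := (hasDerivAt_pow 2 (Real.sin (z.1 1))).comp_hasFDerivAt z hsin
  have hcos := (Real.hasDerivAt_cos (z.1 2)).comp_hasFDerivAt z (hx 2)
  have hcos2 := (hasDerivAt_pow 2 (Real.cos (z.1 2))).comp_hasFDerivAt z hcos
  have hsinp := (Real.hasDerivAt_sin (z.1 2)).comp_hasFDerivAt z (hx 2)
  have hsinp2 := (hasDerivAt_pow 2 (Real.sin (z.1 2))).comp_hasFDerivAt z hsinp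
  have hp0sq := (hasDerivAt_pow 2 (z.2 0)).comp_hasFDerivAt z (hp 0)
  have hp1sq := (hasDerivAt_pow 2 (z.2 1)).comp_hasFDerivAt z (hp 1)
  have hp2sq := (hasDerivAt_pow 2 (z.2 2)).comp_hasFDerivAt z (hp 2)
  -- products
  have hA := hr2.mul hsin2
  have hB := hA.mul hcos2
  have hC := hA.mul hsinp2
  have hD := hsin2.mul hcos2
  have hE := hsin2.mul hsinp2
  -- inverses
  have hrinv := (hasDerivAt_inv hrne).comp_hasFDerivAt z (hx 0)
  have hr2inv := (hasDerivAt_inv hr2ne).comp_hasFDerivAt z hr2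
  have hs2inv := (hasDerivAt_inv hs2ne).comp_hasFDerivAt z hsin2
  have hAinv := (hasDerivAt_inv (mul_ne_zero hr2ne hs2ne)).comp_hasFDerivAt z hA
  have hBinv := (hasDerivAt_inv (mul_ne_zero (mul_ne_zero hr2ne hs2ne) hc2ne)).comp_hasFDerivAt z hB
  have hCinv := (hasDerivAt_inv (mul_ne_zero (mul_ne_zero hr2ne hs2ne) hsn2ne)).comp_hasFDerivAt z hC
  have hDinv := (hasDerivAt_inv (mul_ne_zero hs2ne hc2ne)).comp_hasFDerivAt z hD
  have hEinv := (hasDerivAt_inv (mul_ne_zero hs2ne hsn2ne)).comp_hasFDerivAt z hE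
  -- assemble H
  have hT1 := hp1sq.mul hr2inv
  have hT2 := hp2sq.mul hAinv
  have hT3 := (hp0sq.add hT1).add hT2
  have hT4 := hT3.const_mul ((1:ℝ)/2)
  have hT5 := hrinv.const_mul k
  have hT6 := hT4.sub hT5
  have hT7 := hBinv.const_mul k₁
  have hT8 := hCinv.const_mul k₂
  have hHm := (hT6.add hT7).add hT8
  have hH := hHm.congr_of_eventuallyEq
      (f₁ := fun w : (Fin 3 → ℝ) × (Fin 3 → ℝ) =>
      (1 / 2) * ((w.2 0) ^ 2 + (w.2 1) ^ 2 / (w.1 0) ^ 2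
          + (w.2 2) ^ 2 / ((w.1 0) ^ 2 * Real.sin (w.1 1) ^ 2))
          - k / (w.1 0)
          + k₁ / ((w.1 0) ^ 2 * Real.sin (w.1 1) ^ 2 * Real.cos (w.1 2) ^ 2)
          + k₂ / ((w.1 0) ^ 2 * Real.sin (w.1 1) ^ 2 * Real.sin (w.1 2) ^ 2))
      (Filter.Eventually.of_forall fun w => by simp only [Function.comp, Pi.add_apply, Pi.sub_apply, Pi.mul_apply]; ring)
  -- assemble I₁
  have hIm := (((hp1sq.add (hp2sq.mul hs2inv)).const_mul ((1:ℝ)/2)).add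
      (hDinv.const_mul k₁)).add (hEinv.const_mul k₂)
  have hI := hIm.congr_of_eventuallyEq
      (f₁ := fun w : (Fin 3 → ℝ) × (Fin 3 → ℝ) =>
      (1 / 2) * ((w.2 1) ^ 2 + (w.2 2) ^ 2 / Real.sin (w.1 1) ^ 2)
          + k₁ / (Real.sin (w.1 1) ^ 2 * Real.cos (w.1 2) ^ 2)
          + k₂ / (Real.sin (w.1 1) ^ 2 * Real.sin (w.1 2) ^ 2))
      (Filter.Eventually.of_forall fun w => by simp only [Function.comp, Pi.add_apply, Pi.sub_apply, Pi.mul_apply]; ring)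
  simp only [pb, Fin.sum_univ_three]
  rw [hH.fderiv, hI.fderiv]
  simp only [ContinuousLinearMap.add_apply, ContinuousLinearMap.sub_apply,
    ContinuousLinearMap.smul_apply, ContinuousLinearMap.comp_apply,
    ContinuousLinearMap.coe_fst', ContinuousLinearMap.coe_snd',
    ContinuousLinearMap.proj_apply, Pi.single_apply, smul_eq_mul]
  norm_num [show ((0:Fin 3) = 1) = False from by decide, show ((0:Fin 3) = 2) = False from by decide,
    show ((1:Fin 3) = 0) = False from by decide, show ((1:Fin 3) = 2) = False from by decide,
    show ((2:Fin 3) = 0) = False from by decide, show ((2:Fin 3) = 1) = False from by decide,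
    Function.comp]
  field_simp
  ring
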